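/- If two heaps H_i and H_j are merged into one heap H = H_i ∪ H_j (by assigning to the head of one of them a predecessor lying in the other heap, consistently with the max-heap property), then for every node u ∈ H_i the merged heap H becomes linearized with respect to u after at most |{v ∈ H_i : v ≥ u}| + |H_j| rounds of the linearization dynamics; that is, merging with H_j increases the linearization time of u by at most |H_j|. -/
import Mathlib


/-- `pIter p k v` is the `k`-fold iterate of the partial predecessor map `p` starting at `v`. -/
def pIter {α : Type*} (p : α → Option α) : ℕ → α → Option α
  | 0, v => some v
  | k + 1, v => (p v).bind (pIter p k)

/-- The max-heap property: whenever `p v` is defined for `v ∈ V`, it is a node of `V`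
strictly larger than `v`. -/
def HeapProp {α : Type*} [LinearOrder α] (V : Finset α) (p : α → Option α) : Prop :=
  ∀ v ∈ V, ∀ w, p v = some w → w ∈ V ∧ v < w

/-- One round of the linearization dynamics: every non-maximum child of a node `x`
gets the maximum child of `x` as its new predecessor; all other nodes keep their
predecessor. -/
def roundStep {α : Type*} [LinearOrder α] (V : Finset α) (p : α → Option α) :
    α → Option α := fun v =>
  match p v with
  | none => none
  | some x =>
    if h : (V.filter (fun w => p w = some x)).Nonempty then
      if v = (V.filter (fun w => p w = some x)).max' h then some x
      else some ((V.filter (fun w => p w = some x)).max' h)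
    else some x

/-- `H` is the heap with head `h`: `h` is a head, and `H` consists exactly of the nodes of
`V` from which iterating `p` reaches `h`. -/
def IsHeap {α : Type*} (V : Finset α) (p : α → Option α) (H : Finset α) (h : α) : Prop :=
  h ∈ V ∧ p h = none ∧ ∀ v, v ∈ H ↔ v ∈ V ∧ ∃ k, pIter p k v = some h

/-- The heap `H` with head `h` is linearized with respect to `u`: every non-head node
`v ∈ H` with `v ≥ u` is the maximum among all nodes with the same predecessor. -/
def LinearizedWrt {α : Type*} [LinearOrder α] (V : Finset α) (p : α → Option α)
    (H : Finset α) (h u : α) : Prop :=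
  ∀ v ∈ H, v ≠ h → u ≤ v → ∀ w ∈ V, p w = p v → w ≤ v

set_option linter.unusedSectionVars false
section Aux
variable {α : Type*} [LinearOrder α] {V : Finset α} {p : α → Option α}

theorem pIter_add (p : α → Option α) (a b : ℕ) (v : α) :
    pIter p (a + b) v = (pIter p a v).bind (pIter p b) := by
  induction a generalizing v with
  | zero => simp [pIter]
  | succ a ih =>
    have : a + 1 + b = (a + b) + 1 := by omega
    rw [this]
    show (p v).bind (pIter p (a + b)) = ((p v).bind (pIter p a)).bind (pIter p b)
    cases p v with
    | none => rfl
    | some x => simp [ih]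

theorem pIter_stop {h : α} (hh : p h = none) {k : ℕ} {z : α}
    (hz : pIter p k h = some z) : z = h := by
  cases k with
  | zero => simpa [pIter] using hz.symm
  | succ k => simp [pIter, hh] at hz

theorem pIter_head_unique {h h' v : α} (hh : p h = none) (hh' : p h' = none)
    {k k' : ℕ} (h1 : pIter p k v = some h) (h2 : pIter p k' v = some h') : h = h' := by
  rcases le_total k k' with hle | hle
  · obtain ⟨d, rfl⟩ := Nat.exists_eq_add_of_le hle
    rw [pIter_add, h1] at h2
    exact (pIter_stop hh h2).symm
  · obtain ⟨d, rfl⟩ := Nat.exists_eq_add_of_le hle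
    rw [pIter_add, h2] at h1
    exact pIter_stop hh' h1

theorem pIter_mem_le (hp : HeapProp V p) {k : ℕ} {v h : α} (hv : v ∈ V)
    (hk : pIter p k v = some h) : h ∈ V ∧ v ≤ h := by
  induction k generalizing v with
  | zero => simp [pIter] at hk; subst hk; exact ⟨hv, le_rfl⟩
  | succ k ih =>
    rw [pIter] at hk
    cases hx : p v with
    | none => rw [hx] at hk; simp at hk
    | some x =>
      rw [hx] at hk
      obtain ⟨hxV, hvx⟩ := hp v hv x hx
      obtain ⟨h1, h2⟩ := ih hxV hk
      exact ⟨h1, le_of_lt (lt_of_lt_of_le hvx h2)⟩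

theorem pIter_exists_head (hp : HeapProp V p) {v : α} (hv : v ∈ V) :
    ∃ h k, pIter p k v = some h ∧ p h = none := by
  have H : ∀ n : ℕ, ∀ v ∈ V, (V.filter (fun w => v < w)).card ≤ n →
      ∃ h k, pIter p k v = some h ∧ p h = none := by
    intro n
    induction n with
    | zero =>
      intro v hv hn
      cases hx : p v with
      | none => exact ⟨v, 0, rfl, hx⟩
      | some x =>
        obtain ⟨hxV, hvx⟩ := hp v hv x hx
        have : x ∈ V.filter (fun w => v < w) := Finset.mem_filter.2 ⟨hxV, hvx⟩
        have := Finset.card_pos.2 ⟨x, this⟩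
        omega
    | succ n ih =>
      intro v hv hn
      cases hx : p v with
      | none => exact ⟨v, 0, rfl, hx⟩
      | some x =>
        obtain ⟨hxV, hvx⟩ := hp v hv x hx
        have hss : V.filter (fun w => x < w) ⊂ V.filter (fun w => v < w) := by
          refine Finset.ssubset_iff_of_subset ?_ |>.2 ⟨x, Finset.mem_filter.2 ⟨hxV, hvx⟩, by simp⟩
          intro w hw
          rw [Finset.mem_filter] at hw ⊢
          exact ⟨hw.1, lt_trans hvx hw.2⟩
        have hcard := Finset.card_lt_card hss
        obtain ⟨h, k, hk, hh⟩ := ih x hxV (by omega)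
        exact ⟨h, k + 1, by rw [Nat.add_comm, pIter_add]; simpa [pIter, hx], hh⟩
  exact H _ v hv le_rfl

theorem roundStep_none {v : α} (hv : p v = none) : roundStep V p v = none := by
  simp [roundStep, hv]

theorem roundStep_eq_of_max {v x : α} (hv : v ∈ V) (hx : p v = some x)
    (hmax : ∀ w ∈ V, p w = some x → w ≤ v) : roundStep V p v = some x := by
  have hvC : v ∈ V.filter (fun w => p w = some x) := Finset.mem_filter.2 ⟨hv, hx⟩
  have hC : (V.filter (fun w => p w = some x)).Nonempty := ⟨v, hvC⟩
  have hvm : v = (V.filter (fun w => p w = some x)).max' hC := by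
    refine le_antisymm (Finset.le_max' _ _ hvC) ?_
    have := (V.filter (fun w => p w = some x)).max'_mem hC
    rw [Finset.mem_filter] at this
    exact hmax _ this.1 this.2
  simp [roundStep, hx, hC, ← hvm]

theorem roundStep_cases {v x : α} (hv : v ∈ V) (hx : p v = some x) :
    roundStep V p v = some x ∨
      ∃ m, roundStep V p v = some m ∧ m ∈ V ∧ p m = some x ∧ v < m ∧
        roundStep V p m = some x := by
  have hvC : v ∈ V.filter (fun w => p w = some x) := Finset.mem_filter.2 ⟨hv, hx⟩
  have hC : (V.filter (fun w => p w = some x)).Nonempty := ⟨v, hvC⟩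
  set m := (V.filter (fun w => p w = some x)).max' hC with hm
  have hmC := (V.filter (fun w => p w = some x)).max'_mem hC
  rw [Finset.mem_filter] at hmC
  by_cases hvm : v = m
  · left; simp [roundStep, hx, hC, ← hm, ← hvm]
  · right
    refine ⟨m, ?_, hmC.1, hmC.2, lt_of_le_of_ne (Finset.le_max' _ _ hvC) hvm, ?_⟩
    · simp [roundStep, hx, hC, ← hm, hvm]
    · exact roundStep_eq_of_max hmC.1 hmC.2 (fun w hw hwx =>
        Finset.le_max' _ _ (Finset.mem_filter.2 ⟨hw, hwx⟩))

theorem roundStep_inv {w z : α} (hw : w ∈ V) (hz : roundStep V p w = some z) :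
    ∃ y, p w = some y ∧
      ((z = y ∧ ∀ w' ∈ V, p w' = some y → w' ≤ w) ∨
       (z ∈ V ∧ p z = some y ∧ w < z ∧ ∀ w' ∈ V, p w' = some y → w' ≤ z)) := by
  cases hy : p w with
  | none => rw [roundStep_none hy] at hz; simp at hz
  | some y =>
    refine ⟨y, rfl, ?_⟩
    have hwC : w ∈ V.filter (fun w' => p w' = some y) := Finset.mem_filter.2 ⟨hw, hy⟩
    have hC : (V.filter (fun w' => p w' = some y)).Nonempty := ⟨w, hwC⟩
    have hle : ∀ w' ∈ V, p w' = some y → w' ≤ (V.filter (fun w' => p w' = some y)).max' hC :=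
      fun w' hw' hw'y => Finset.le_max' _ _ (Finset.mem_filter.2 ⟨hw', hw'y⟩)
    have hmC := (V.filter (fun w' => p w' = some y)).max'_mem hC
    rw [Finset.mem_filter] at hmC
    by_cases hwm : w = (V.filter (fun w' => p w' = some y)).max' hC
    · left
      have : roundStep V p w = some y := by simp [roundStep, hy, hC, ← hwm]
      rw [this] at hz
      exact ⟨(Option.some_inj.1 hz).symm, by rw [hwm]; exact hle⟩
    · right
      have : roundStep V p w = some ((V.filter (fun w' => p w' = some y)).max' hC) := by
        simp [roundStep, hy, hC, hwm]
      rw [this] at hz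
      obtain rfl := Option.some_inj.1 hz
      exact ⟨hmC.1, hmC.2, lt_of_le_of_ne (Finset.le_max' _ _ hwC) hwm, hle⟩

theorem heapProp_roundStep (hp : HeapProp V p) : HeapProp V (roundStep V p) := by
  intro v hv z hz
  cases hy : p v with
  | none => rw [roundStep_none hy] at hz; simp at hz
  | some y =>
    rcases roundStep_cases hv hy with h | ⟨m, hm, hmV, _, hvm, _⟩
    · rw [h] at hz; obtain rfl := Option.some_inj.1 hz
      exact hp v hv _ hy
    · rw [hm] at hz; obtain rfl := Option.some_inj.1 hz
      exact ⟨hmV, hvm⟩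

end Aux
set_option linter.unusedSectionVars false
section Aux2
variable {α : Type*} [LinearOrder α] {V H : Finset α} {p : α → Option α} {hd : α}

theorem isHeap_subset (hH : IsHeap V p H hd) : H ⊆ V := fun v hv => ((hH.2.2 v).1 hv).1

theorem isHeap_head_mem (hH : IsHeap V p H hd) : hd ∈ H :=
  (hH.2.2 hd).2 ⟨hH.1, 0, rfl⟩

theorem isHeap_le_head (hp : HeapProp V p) (hH : IsHeap V p H hd) {v : α} (hv : v ∈ H) :
    v ≤ hd := by
  obtain ⟨hvV, k, hk⟩ := (hH.2.2 v).1 hv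
  exact (pIter_mem_le hp hvV hk).2

theorem isHeap_child_mem (hH : IsHeap V p H hd) {w x : α} (hw : w ∈ V)
    (hwx : p w = some x) (hx : x ∈ H) : w ∈ H := by
  obtain ⟨_, k, hk⟩ := (hH.2.2 x).1 hx
  exact (hH.2.2 w).2 ⟨hw, k + 1, by rw [Nat.add_comm, pIter_add]; simpa [pIter, hwx]⟩

theorem isHeap_parent (hp : HeapProp V p) (hH : IsHeap V p H hd) {v : α} (hv : v ∈ H)
    (hne : v ≠ hd) : ∃ x, p v = some x ∧ x ∈ H ∧ v < x := by
  obtain ⟨hvV, k, hk⟩ := (hH.2.2 v).1 hv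
  cases k with
  | zero => simp [pIter] at hk; exact absurd hk hne
  | succ k =>
    rw [pIter] at hk
    cases hx : p v with
    | none => rw [hx] at hk; simp at hk
    | some x =>
      rw [hx] at hk
      obtain ⟨hxV, hvx⟩ := hp v hvV x hx
      exact ⟨x, rfl, (hH.2.2 x).2 ⟨hxV, k, hk⟩, hvx⟩

theorem reach_roundStep (hp : HeapProp V p) {k : ℕ} {v h : α} (hv : v ∈ V)
    (hk : pIter p k v = some h) : ∃ j, pIter (roundStep V p) j v = some h := by
  induction k generalizing v with
  | zero => exact ⟨0, hk⟩
  | succ k ih =>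
    rw [pIter] at hk
    cases hx : p v with
    | none => rw [hx] at hk; simp at hk
    | some x =>
      rw [hx] at hk
      obtain ⟨hxV, _⟩ := hp v hv x hx
      obtain ⟨j, hj⟩ := ih hxV hk
      rcases roundStep_cases hv hx with h1 | ⟨m, hm, hmV, _, _, hm2⟩
      · exact ⟨j + 1, by rw [Nat.add_comm, pIter_add]; simpa [pIter, h1]⟩
      · refine ⟨j + 2, ?_⟩
        have : j + 2 = 1 + (1 + j) := by omega
        rw [this, pIter_add]
        simp only [pIter, hm, Option.bind_some, Option.bind_some]
        rw [pIter_add]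
        simp only [pIter, hm2, Option.bind_some, Option.bind_some]
        exact hj

theorem isHeap_roundStep (hp : HeapProp V p) (hH : IsHeap V p H hd) :
    IsHeap V (roundStep V p) H hd := by
  refine ⟨hH.1, roundStep_none hH.2.1, fun v => ⟨?_, ?_⟩⟩
  · intro hv
    obtain ⟨hvV, k, hk⟩ := (hH.2.2 v).1 hv
    exact ⟨hvV, reach_roundStep hp hvV hk⟩
  · rintro ⟨hvV, k, hk⟩
    obtain ⟨h₀, k₀, hk₀, hh₀⟩ := pIter_exists_head hp hvV
    obtain ⟨j, hj⟩ := reach_roundStep hp hvV hk₀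
    have : hd = h₀ :=
      pIter_head_unique (roundStep_none hH.2.1) (roundStep_none hh₀) hk hj
    exact (hH.2.2 v).2 ⟨hvV, k₀, by rw [this]; exact hk₀⟩

end Aux2
set_option linter.unusedSectionVars false
section Aux3
variable {α : Type*} [LinearOrder α] {V H : Finset α} {p₀ : α → Option α} {hd : α}

theorem rank_lt_rank {a b : α} (hb : b ∈ H) (hab : a < b) :
    (H.filter (fun w => b < w)).card < (H.filter (fun w => a < w)).card := by
  refine Finset.card_lt_card ?_
  refine (Finset.ssubset_iff_of_subset ?_).2 ⟨b, Finset.mem_filter.2 ⟨hb, hab⟩, by simp⟩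
  intro w hw
  rw [Finset.mem_filter] at hw ⊢
  exact ⟨hw.1, lt_trans hab hw.2⟩

theorem inv_lemma (hp₀ : HeapProp V p₀) (hH₀ : IsHeap V p₀ H hd) :
    ∀ t : ℕ,
      HeapProp V ((fun q => roundStep V q)^[t] p₀) ∧
      IsHeap V ((fun q => roundStep V q)^[t] p₀) H hd ∧
      ∀ v ∈ H, v ≠ hd → (H.filter (fun w => v < w)).card ≤ t →
        ∃ s, s ∈ H ∧ v < s ∧ (∀ w ∈ H, v < w → s ≤ w) ∧
          ((fun q => roundStep V q)^[t] p₀) v = some s ∧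
          ∀ w ∈ V, ((fun q => roundStep V q)^[t] p₀) w = some s → w = v := by
  intro t
  induction t with
  | zero =>
    refine ⟨hp₀, hH₀, fun v hv hne hcard => absurd hcard ?_⟩
    have : hd ∈ H.filter (fun w => v < w) := by
      refine Finset.mem_filter.2 ⟨isHeap_head_mem hH₀,
        lt_of_le_of_ne (isHeap_le_head hp₀ hH₀ hv) hne⟩
    have hpos : 0 < (H.filter (fun w => v < w)).card := Finset.card_pos.2 ⟨hd, this⟩
    omega
  | succ t IH =>
    obtain ⟨hpq, hHq, IHinv⟩ := IH
    set q := (fun q => roundStep V q)^[t] p₀ with hqdef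
    have hstep : (fun q => roundStep V q)^[t + 1] p₀ = roundStep V q := by
      rw [Function.iterate_succ_apply']
    rw [hstep]
    refine ⟨heapProp_roundStep hpq, isHeap_roundStep hpq hHq, ?_⟩
    intro v hv hne hcard
    have hvV : v ∈ V := isHeap_subset hHq hv
    by_cases hrank : (H.filter (fun w => v < w)).card ≤ t
    · -- rank v ≤ t : already linearized, stays linearized
      obtain ⟨s, hsH, hvs, hsmin, hqv, huniq⟩ := IHinv v hv hne hrank
      refine ⟨s, hsH, hvs, hsmin,
        roundStep_eq_of_max hvV hqv (fun w hw hwx => le_of_eq (huniq w hw hwx)), ?_⟩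
      intro w hwV hw
      obtain ⟨y, hqw, hcase⟩ := roundStep_inv hwV hw
      rcases hcase with ⟨rfl, _⟩ | ⟨hsV, hqs, hws, _⟩
      · exact huniq w hwV hqw
      · exfalso
        have hshd : s ≠ hd := by rintro rfl; rw [hHq.2.1] at hqs; cases hqs
        have hranks : (H.filter (fun w => s < w)).card ≤ t :=
          le_of_lt (lt_of_lt_of_le (rank_lt_rank hsH hvs) hrank)
        obtain ⟨s2, _, _, _, hqs2, huniq2⟩ := IHinv s hsH hshd hranks
        have hy : y = s2 := by rw [hqs] at hqs2; exact Option.some_inj.1 hqs2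
        exact absurd (huniq2 w hwV (by rw [hqw, hy])) (ne_of_lt hws)
    · -- rank v = t + 1 : v gets linearized this round
      obtain ⟨x, hqv, hxH, hvx⟩ := isHeap_parent hpq hHq hv hne
      have hxmin : ∀ w ∈ H, v < w → x ≤ w := by
        have hvF : v ∈ H.filter (fun z => z < x) := Finset.mem_filter.2 ⟨hv, hvx⟩
        have hFne : (H.filter (fun z => z < x)).Nonempty := ⟨v, hvF⟩
        obtain ⟨v', hv'mem, hv'max⟩ :
            ∃ v', v' ∈ H.filter (fun z => z < x) ∧
              ∀ w ∈ H.filter (fun z => z < x), w ≤ v' :=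
          ⟨_, Finset.max'_mem _ hFne, fun w hw => Finset.le_max' _ w hw⟩
        obtain ⟨hv'H, hv'x⟩ := Finset.mem_filter.1 hv'mem
        by_cases hv'v : v' = v
        · intro w hwH hvw
          by_contra hlt
          push_neg at hlt
          have : w ≤ v' := hv'max w (Finset.mem_filter.2 ⟨hwH, hlt⟩)
          rw [hv'v] at this
          exact absurd hvw (not_lt.2 this)
        · exfalso
          have hvv' : v < v' :=
            lt_of_le_of_ne (hv'max v hvF) (Ne.symm hv'v)
          have hrankv' : (H.filter (fun w => v' < w)).card ≤ t := by
            have := rank_lt_rank hv'H hvv'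
            omega
          have hv'hd : v' ≠ hd :=
            ne_of_lt (lt_of_lt_of_le hv'x (isHeap_le_head hpq hHq hxH))
          obtain ⟨s2, hs2H, hs2gt, hs2min, hqv', huniq2⟩ :=
            IHinv v' hv'H hv'hd hrankv'
          have hs2x : s2 = x := by
            refine le_antisymm (hs2min x hxH hv'x) ?_
            by_contra hlt
            push_neg at hlt
            have : s2 ≤ v' := hv'max s2 (Finset.mem_filter.2 ⟨hs2H, hlt⟩)
            exact absurd hs2gt (not_lt.2 this)
          have : v = v' := huniq2 v hvV (by rw [hqv, hs2x])
          exact absurd this (ne_of_lt hvv')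
      refine ⟨x, hxH, hvx, hxmin, ?_, ?_⟩
      · refine roundStep_eq_of_max hvV hqv (fun w hwV hwx => ?_)
        have hwlt := (hpq w hwV x hwx).2
        have hwH : w ∈ H := isHeap_child_mem hHq hwV hwx hxH
        by_contra h
        push_neg at h
        exact absurd (hxmin w hwH h) (not_le.2 hwlt)
      · intro w hwV hw
        obtain ⟨y, hqw, hcase⟩ := roundStep_inv hwV hw
        rcases hcase with ⟨rfl, hmaxw⟩ | ⟨hxV, hqx, hwx, _⟩
        · have hvw := hmaxw v hvV hqv
          have hwH : w ∈ H := isHeap_child_mem hHq hwV hqw hxH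
          have hwlt := (hpq w hwV x hqw).2
          rcases lt_or_ge v w with h' | h'
          · exact absurd (hxmin w hwH h') (not_le.2 hwlt)
          · exact le_antisymm h' hvw
        · exfalso
          have hxhd : x ≠ hd := by rintro rfl; rw [hHq.2.1] at hqx; cases hqx
          have hrankx : (H.filter (fun w => x < w)).card ≤ t := by
            have := rank_lt_rank hxH hvx
            omega
          obtain ⟨s2, _, _, _, hqx2, huniq2⟩ := IHinv x hxH hxhd hrankx
          have hy : y = s2 := by rw [hqx] at hqx2; exact Option.some_inj.1 hqx2
          exact absurd (huniq2 w hwV (by rw [hqw, hy])) (ne_of_lt hwx)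

theorem main_single (hp₀ : HeapProp V p₀) (hH₀ : IsHeap V p₀ H hd) (u : α) (i : ℕ)
    (hcard : (H.filter (fun v => u ≤ v)).card ≤ i + 1) (hu : u ≤ hd) :
    LinearizedWrt V ((fun q => roundStep V q)^[i] p₀) H hd u := by
  intro v hv hne huv w hwV hpw
  obtain ⟨_, _, hinv⟩ := inv_lemma hp₀ hH₀ i
  have hrank : (H.filter (fun w => v < w)).card ≤ i := by
    have hsub : H.filter (fun w => v < w) ⊆ (H.filter (fun v => u ≤ v)).erase v := by
      intro z hz
      rw [Finset.mem_filter] at hz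
      exact Finset.mem_erase.2 ⟨ne_of_gt hz.2, Finset.mem_filter.2 ⟨hz.1, le_of_lt (lt_of_le_of_lt huv hz.2)⟩⟩
    have h1 := Finset.card_le_card hsub
    have h2 : ((H.filter (fun v => u ≤ v)).erase v).card =
        (H.filter (fun v => u ≤ v)).card - 1 :=
      Finset.card_erase_of_mem (Finset.mem_filter.2 ⟨hv, huv⟩)
    omega
  obtain ⟨s, _, _, _, hqv, huniq⟩ := hinv v hv hne hrank
  rw [hqv] at hpw
  exact le_of_eq (huniq w hwV hpw)

end Aux3
set_option linter.unusedSectionVars false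
section Aux4
variable {α : Type*} [LinearOrder α] {V : Finset α} {p p₁ : α → Option α}

theorem pIter_congr_avoid {k : ℕ} {v h : α} (hk : pIter p k v = some h)
    (hagree : ∀ j, j < k → ∀ z, pIter p j v = some z → p₁ z = p z) :
    pIter p₁ k v = some h := by
  induction k generalizing v with
  | zero => exact hk
  | succ k ih =>
    rw [pIter] at hk ⊢
    cases hx : p v with
    | none => rw [hx] at hk; simp at hk
    | some x =>
      rw [hx] at hk
      have hv1 : p₁ v = p v := hagree 0 (Nat.succ_pos k) v rfl
      rw [hv1, hx]
      refine ih hk (fun j hj z hz => ?_)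
      refine hagree (j + 1) (by omega) z ?_
      rw [Nat.add_comm, pIter_add]
      simpa [pIter, hx]

theorem pIter_tail {k j : ℕ} {v z h : α} (hk : pIter p k v = some h) (hj : j ≤ k)
    (hz : pIter p j v = some z) : pIter p (k - j) z = some h := by
  obtain ⟨d, rfl⟩ := Nat.exists_eq_add_of_le hj
  rw [pIter_add, hz] at hk
  simpa using hk

theorem merge_ok (hp : HeapProp V p) {Hi Hj : Finset α} {hi hj : α}
    (hHi : IsHeap V p Hi hi) (hHj : IsHeap V p Hj hj) (hdisj : Disjoint Hi Hj)
    {w : α} (hw : w ∈ Hj) (hlt : hi < w)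
    (h1 : p₁ hi = some w) (h2 : ∀ v, v ≠ hi → p₁ v = p v) :
    HeapProp V p₁ ∧ IsHeap V p₁ (Hi ∪ Hj) hj ∧ hi ≤ hj := by
  have hiHi : hi ∈ Hi := isHeap_head_mem hHi
  have hjHj : hj ∈ Hj := isHeap_head_mem hHj
  have hij : hi ≠ hj := fun e => Finset.disjoint_left.1 hdisj hiHi (e ▸ hjHj)
  have hjnone : p₁ hj = none := by rw [h2 hj (Ne.symm hij)]; exact hHj.2.1
  have hp₁ : HeapProp V p₁ := by
    intro v hv z hz
    by_cases hvi : v = hi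
    · subst hvi
      rw [h1] at hz
      obtain rfl := Option.some_inj.1 hz
      exact ⟨isHeap_subset hHj hw, hlt⟩
    · rw [h2 v hvi] at hz
      exact hp v hv z hz
  -- transfer of a p-path ending at a head ≠ hi to p₁
  have transfer : ∀ v ∈ V, ∀ h₀, p h₀ = none → h₀ ≠ hi → ∀ k, pIter p k v = some h₀ →
      pIter p₁ k v = some h₀ := by
    intro v hvV h₀ hh₀ hh₀i k hk
    refine pIter_congr_avoid hk (fun j hj' z hz => ?_)
    have htail : pIter p (k - j) z = some h₀ := pIter_tail hk (le_of_lt hj') hz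
    refine h2 z (fun e => ?_)
    subst e
    have : h₀ = z := pIter_stop hHi.2.1 htail
    exact hh₀i this
  refine ⟨hp₁, ⟨isHeap_subset hHj hjHj, hjnone, fun v => ⟨?_, ?_⟩⟩,
    le_of_lt (lt_of_lt_of_le hlt (isHeap_le_head hp hHj hw))⟩
  · intro hv
    rcases Finset.mem_union.1 hv with hvi | hvj
    · -- v ∈ Hi : go to hi, then jump to w ∈ Hj, then to hj
      obtain ⟨hvV, k, hk⟩ := (hHi.2.2 v).1 hvi
      have hk₁ : pIter p₁ k v = some hi := by
        refine pIter_congr_avoid hk (fun j hj' z hz => ?_)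
        have htail : pIter p (k - j) z = some hi := pIter_tail hk (le_of_lt hj') hz
        refine h2 z (fun e => ?_)
        subst e
        obtain ⟨d, hd⟩ := Nat.exists_eq_add_of_lt hj'
        have : k - j = d + 1 := by omega
        rw [this, Nat.add_comm, pIter_add] at htail
        simp [pIter, hHi.2.1] at htail
      obtain ⟨hwV, m, hm⟩ := (hHj.2.2 w).1 hw
      have hm₁ : pIter p₁ m w = some hj :=
        transfer w hwV hj hHj.2.1 (Ne.symm hij) m hm
      refine ⟨hvV, k + (1 + m), ?_⟩
      rw [pIter_add, hk₁]
      show pIter p₁ (1 + m) hi = some hj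
      rw [pIter_add]
      simpa [pIter, h1] using hm₁
    · obtain ⟨hvV, k, hk⟩ := (hHj.2.2 v).1 hvj
      exact ⟨hvV, k, transfer v hvV hj hHj.2.1 (Ne.symm hij) k hk⟩
  · rintro ⟨hvV, k, hk⟩
    obtain ⟨h₀, k₀, hk₀, hh₀⟩ := pIter_exists_head hp hvV
    by_cases hcase : h₀ = hi
    · exact Finset.mem_union_left _ ((hHi.2.2 v).2 ⟨hvV, k₀, hcase ▸ hk₀⟩)
    · by_cases hcase2 : h₀ = hj
      · exact Finset.mem_union_right _ ((hHj.2.2 v).2 ⟨hvV, k₀, hcase2 ▸ hk₀⟩)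
      · exfalso
        have hk₀' : pIter p₁ k₀ v = some h₀ := transfer v hvV h₀ hh₀ hcase k₀ hk₀
        have hh₀' : p₁ h₀ = none := by rw [h2 h₀ hcase]; exact hh₀
        exact hcase2 (pIter_head_unique hh₀' hjnone hk₀' hk)

end Aux4

/-- If two disjoint heaps `H_i` (head `hi`) and `H_j` (head `hj`) are merged into one heap
`H = H_i ∪ H_j` — by assigning to the head of one of them a predecessor lying in the other
heap, consistently with the max-heap property, all other predecessors unchanged — then for
every `u ∈ H_i` the merged heap becomes linearized with respect to `u` after at most
`|{v ∈ H_i : v ≥ u}| + |H_j|` rounds of the linearization dynamics; i.e. merging with `H_j`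
increases the linearization time of `u` by at most `|H_j|`. -/
theorem stmt4 {α : Type*} [LinearOrder α] (V : Finset α) (p : α → Option α)
    (hp : HeapProp V p)
    (Hi Hj : Finset α) (hi hj : α)
    (hHi : IsHeap V p Hi hi) (hHj : IsHeap V p Hj hj)
    (hdisj : Disjoint Hi Hj)
    (p₁ : α → Option α)
    (hmerge :
      (∃ w ∈ Hj, hi < w ∧ p₁ hi = some w ∧ ∀ v, v ≠ hi → p₁ v = p v) ∨
      (∃ w ∈ Hi, hj < w ∧ p₁ hj = some w ∧ ∀ v, v ≠ hj → p₁ v = p v)) :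
    ∀ u ∈ Hi, ∀ i : ℕ, (Hi.filter (fun v => u ≤ v)).card + Hj.card ≤ i →
      LinearizedWrt V ((fun q => roundStep V q)^[i] p₁) (Hi ∪ Hj) (max hi hj) u := by
  intro u hu i hile
  have hsub : (Hi ∪ Hj).filter (fun v => u ≤ v) ⊆ Hi.filter (fun v => u ≤ v) ∪ Hj := by
    intro z hz
    rw [Finset.mem_filter, Finset.mem_union] at hz
    rcases hz.1 with h | h
    · exact Finset.mem_union_left _ (Finset.mem_filter.2 ⟨h, hz.2⟩)
    · exact Finset.mem_union_right _ h
  have hcard : ((Hi ∪ Hj).filter (fun v => u ≤ v)).card ≤ i + 1 := by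
    have h1c := Finset.card_le_card hsub
    have h2c := Finset.card_union_le (Hi.filter (fun v => u ≤ v)) Hj
    omega
  rcases hmerge with ⟨w, hw, hlt, h1, h2⟩ | ⟨w, hw, hlt, h1, h2⟩
  · obtain ⟨hp₁, hH₁, hij⟩ := merge_ok hp hHi hHj hdisj hw hlt h1 h2
    rw [max_eq_right hij]
    exact main_single hp₁ hH₁ u i hcard (le_trans (isHeap_le_head hp hHi hu) hij)
  · obtain ⟨hp₁, hH₁, hij⟩ := merge_ok hp hHj hHi hdisj.symm hw hlt h1 h2
    rw [max_eq_left hij, Finset.union_comm]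
    rw [Finset.union_comm] at hcard
    exact main_single hp₁ hH₁ u i hcard (isHeap_le_head hp hHi hu)
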